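/- [Lemma 3.1, case where the second agent never visits v; lifted form] Let c > 0, let a ≤ b be reals and let v ∈ ℝ. Let F, G : ℝ → ℝ be continuous on the interval [a,b] with F(a) = v and F(b) = v + c (the first agent executes one full tour of the cycle starting and ending at the point v), and suppose that G(t) − v ∉ cℤ for every t ∈ [a,b] (the second agent is never at the point v of the cycle during this period). Then there exists t ∈ [a,b] with F(t) − G(t) ∈ cℤ, i.e., the two agents meet on the cycle. -/

import Mathlib

/-- **Lemma 3.1, case where the second agent never visits `v`; lifted form.**
Two agents move on a cycle of circumference `c > 0`, modeled via its universal cover `ℝ`: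
two reals represent the same point of the cycle iff their difference lies in `cℤ`.
If the first agent executes one full tour starting and ending at `v`
(`F a = v`, `F b = v + c`), while the second agent is never at the point `v`
of the cycle during `[a, b]`, then the two agents meet on the cycle. -/
theorem rendezvous_full_tour_other_avoids_v
    (c : ℝ) (hc : 0 < c) (a b v : ℝ) (hab : a ≤ b) (F G : ℝ → ℝ)
    (hF : ContinuousOn F (Set.Icc a b)) (hG : ContinuousOn G (Set.Icc a b))
    (hFa : F a = v) (hFb : F b = v + c)
    (hGv : ∀ t ∈ Set.Icc a b, ¬ ∃ n : ℤ, G t - v = n * c) :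
    ∃ t ∈ Set.Icc a b, ∃ n : ℤ, F t - G t = n * c := by
  set g : ℝ → ℝ := fun t => (G t - v) / c with hgdef
  have hgcont : ContinuousOn g (Set.Icc a b) :=
    ((hG.sub continuousOn_const).div_const c)
  have hgne : ∀ t ∈ Set.Icc a b, ∀ m : ℤ, g t ≠ m := by
    intro t ht m hm
    exact hGv t ht ⟨m, by have h' : (G t - v) / c = m := hm; rw [div_eq_iff hc.ne'] at h'; linarith⟩
  have ha : a ∈ Set.Icc a b := ⟨le_refl a, hab⟩
  set n₀ : ℤ := ⌊g a⌋ with hn₀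
  have hga_lt : g a < n₀ + 1 := Int.lt_floor_add_one _
  have hga_gt : (n₀ : ℝ) < g a :=
    lt_of_le_of_ne (Int.floor_le _) (fun h => hgne a ha n₀ h.symm)
  -- g stays strictly between n₀ and n₀ + 1
  have hband : ∀ t ∈ Set.Icc a b, (n₀ : ℝ) < g t ∧ g t < n₀ + 1 := by
    intro t ht
    have hsub : Set.uIcc a t ⊆ Set.Icc a b := by
      rw [Set.uIcc_of_le ht.1]
      exact Set.Icc_subset_Icc le_rfl ht.2
    have hivt := intermediate_value_uIcc (hgcont.mono hsub)
    constructor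
    · by_contra h
      push_neg at h
      have : (n₀ : ℝ) ∈ Set.uIcc (g a) (g t) :=
        Set.mem_uIcc.2 (Or.inr ⟨h, le_of_lt hga_gt⟩)
      obtain ⟨s, hs, hgs⟩ := hivt this
      exact hgne s (hsub hs) n₀ hgs
    · by_contra h
      push_neg at h
      have : ((n₀ + 1 : ℤ) : ℝ) ∈ Set.uIcc (g a) (g t) := by
        push_cast
        exact Set.mem_uIcc.2 (Or.inl ⟨le_of_lt hga_lt, h⟩)
      obtain ⟨s, hs, hgs⟩ := hivt this
      exact hgne s (hsub hs) (n₀ + 1) hgs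
  -- G t = v + c * g t
  have hGeq : ∀ t, G t = v + c * g t := by
    intro t; show G t = v + c * ((G t - v) / c); rw [mul_div_cancel₀ _ hc.ne']; ring
  -- apply IVT to ψ = F - G
  set ψ : ℝ → ℝ := fun t => F t - G t with hψ
  have hψcont : ContinuousOn ψ (Set.Icc a b) := hF.sub hG
  have hb : b ∈ Set.Icc a b := ⟨hab, le_refl b⟩
  have h1 : ψ a < -n₀ * c := by
    have := (hband a ha).1
    rw [hψ]; simp only; rw [hFa, hGeq a]; nlinarith
  have h2 : -n₀ * c < ψ b := by
    have := (hband b hb).2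
    rw [hψ]; simp only; rw [hFb, hGeq b]; nlinarith
  have hivt := intermediate_value_Icc hab hψcont
  have : (-n₀ * c : ℝ) ∈ Set.Icc (ψ a) (ψ b) := ⟨le_of_lt h1, le_of_lt h2⟩
  obtain ⟨t, ht, hψt⟩ := hivt this
  exact ⟨t, ht, -n₀, by simp only [hψ] at hψt; push_cast; linarith⟩
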